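/- Let (S(n)) be the homogeneous random walk on Z^2 with jump distribution μ satisfying: μ is irreducible on Z^2, μ(j_1,j_2)=0 whenever j_2 < -1, and the generating function P(x,y)=Σ μ(k) x^{k_1}y^{k_2} is finite in a neighborhood of D = {P ≤ 1}, which is compact with nonempty interior. Let τ_1 = inf{n ≥ 1 : S(n) ∈ Z×{0}}. Then for every j = (j_1,j_2) with j_2 > 0 and every x ∈ [x*_P, x**_P], E_j[x^{S_1(τ_1)} ; τ_1 < ∞] = x^{j_1} · (Y_1(x))^{j_2}, where Y_1(x) is the smallest positive solution of P(x,y)=1. -/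

import Mathlib

/-- `n`-step transition function of the (sub)Markov chain with one-step kernel `p`. -/
noncomputable def iterK {S : Type*} [DecidableEq S] (p : S → S → ℝ) : ℕ → S → S → ℝ
  | 0 => fun j k => if j = k then 1 else 0
  | n + 1 => fun j k => ∑' l, iterK p n j l * p l k

/-- One-step kernel of the homogeneous random walk on `ℤ²` with jump law `μ`. -/
noncomputable def homK (μ : ℤ × ℤ → ℝ) : ℤ × ℤ → ℤ × ℤ → ℝ := fun j k => μ (k - j)

/-- The homogeneous kernel killed on the horizontal axis `ℤ × {0}`. -/
noncomputable def axisKillK (μ : ℤ × ℤ → ℝ) : ℤ × ℤ → ℤ × ℤ → ℝ :=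
  fun j k => if k.2 = 0 then 0 else μ (k - j)

/-- Generating function `∑_k ν(k) x^{k₁} y^{k₂}` of a jump measure on `ℤ²`. -/
noncomputable def genG (ν : ℤ × ℤ → ℝ) (x y : ℝ) : ℝ :=
  ∑' k : ℤ × ℤ, ν k * x ^ k.1 * y ^ k.2

/-- `E_j[x^{S₁(τ₁)} ; τ₁ < ∞]`, where `τ₁ = inf{n ≥ 1 : S(n) ∈ ℤ×{0}}`. -/
noncomputable def hitExp (μ : ℤ × ℤ → ℝ) (x : ℝ) (j : ℤ × ℤ) : ℝ :=
  ∑' n : ℕ, ∑' k₁ : ℤ,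
    (∑' l : ℤ × ℤ, iterK (axisKillK μ) n j l * homK μ l (k₁, 0)) * x ^ k₁

open scoped ENNReal
open Function

namespace RWaux

variable {S : Type*} [DecidableEq S]

/-- `ℝ≥0∞`-valued iterated kernel. -/
noncomputable def eIter (p : S → S → ℝ≥0∞) : ℕ → S → S → ℝ≥0∞
  | 0 => fun j k => if j = k then 1 else 0
  | n + 1 => fun j k => ∑' l, eIter p n j l * p l k

@[simp] lemma eIter_zero (p : S → S → ℝ≥0∞) (j k : S) :
    eIter p 0 j k = if j = k then 1 else 0 := rfl

lemma eIter_succ (p : S → S → ℝ≥0∞) (n : ℕ) (j k : S) :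
    eIter p (n+1) j k = ∑' l, eIter p n j l * p l k := rfl

lemma iterK_zero (p : S → S → ℝ) (j k : S) : iterK p 0 j k = if j = k then 1 else 0 := rfl

lemma iterK_succ (p : S → S → ℝ) (n : ℕ) (j k : S) :
    iterK p (n+1) j k = ∑' l, iterK p n j l * p l k := rfl

lemma eIter_succ_left (p : S → S → ℝ≥0∞) (n : ℕ) (j k : S) :
    eIter p (n+1) j k = ∑' l, p j l * eIter p n l k := by
  induction n generalizing k with
  | zero =>
      have h1 : (∑' l, eIter p 0 j l * p l k) = p j k := by
        rw [tsum_eq_single j (fun l hl => by simp [Ne.symm hl])]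
        simp
      have h2 : (∑' l, p j l * eIter p 0 l k) = p j k := by
        rw [tsum_eq_single k (fun l hl => by simp [hl])]
        simp
      rw [eIter_succ, h1, h2]
  | succ n ih =>
      calc eIter p (n+2) j k = ∑' l, eIter p (n+1) j l * p l k := rfl
        _ = ∑' l, (∑' m, p j m * eIter p n m l) * p l k := by simp only [ih]
        _ = ∑' l, ∑' m, p j m * eIter p n m l * p l k := by
              simp only [← ENNReal.tsum_mul_right]
        _ = ∑' m, ∑' l, p j m * eIter p n m l * p l k := ENNReal.tsum_comm
        _ = ∑' m, p j m * ∑' l, eIter p n m l * p l k := by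
              simp only [mul_assoc, ENNReal.tsum_mul_left]
        _ = ∑' m, p j m * eIter p (n+1) m k := rfl

lemma eIter_mass_le (p : S → S → ℝ≥0∞) (hp : ∀ l, ∑' k, p l k ≤ 1) (n : ℕ) (j : S) :
    ∑' k, eIter p n j k ≤ 1 := by
  induction n with
  | zero =>
      have : ∑' k, eIter p 0 j k = 1 := by
        rw [tsum_eq_single j (fun k hk => by simp [Ne.symm hk])]; simp
      exact le_of_eq this
  | succ n ih =>
      calc ∑' k, eIter p (n+1) j k = ∑' k, ∑' l, eIter p n j l * p l k := rfl
        _ = ∑' l, ∑' k, eIter p n j l * p l k := ENNReal.tsum_comm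
        _ = ∑' l, eIter p n j l * ∑' k, p l k := by simp only [ENNReal.tsum_mul_left]
        _ ≤ ∑' l, eIter p n j l * 1 := ENNReal.tsum_le_tsum fun l => mul_le_mul_right (hp l) _
        _ ≤ 1 := by simpa using ih

lemma iterK_nonneg (q : S → S → ℝ) (hq : ∀ l k, 0 ≤ q l k) (n : ℕ) (j k : S) :
    0 ≤ iterK q n j k := by
  induction n generalizing k with
  | zero => rw [iterK_zero]; split <;> norm_num
  | succ n ih => exact tsum_nonneg fun l => mul_nonneg (ih l) (hq l k)

lemma ofReal_iterK (q : S → S → ℝ) (hq : ∀ l k, 0 ≤ q l k)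
    (p : S → S → ℝ≥0∞) (hpq : ∀ l k, p l k = ENNReal.ofReal (q l k))
    (hp : ∀ l, ∑' k, p l k ≤ 1) (n : ℕ) (j k : S) :
    ENNReal.ofReal (iterK q n j k) = eIter p n j k := by
  induction n generalizing k with
  | zero =>
      rw [iterK_zero, eIter_zero]
      split <;> simp
  | succ n ih =>
      have hfin : (∑' l, eIter p n j l * p l k) ≠ ∞ := by
        refine ne_top_of_le_ne_top ENNReal.one_ne_top ?_
        calc ∑' l, eIter p n j l * p l k
            ≤ ∑' l, eIter p n j l * 1 :=
              ENNReal.tsum_le_tsum fun l =>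
                mul_le_mul_right (le_trans (ENNReal.le_tsum k) (hp l)) _
          _ ≤ 1 := by simpa using eIter_mass_le p hp n j
      have hterm : ∀ l, eIter p n j l * p l k = ENNReal.ofReal (iterK q n j l * q l k) := by
        intro l
        rw [ENNReal.ofReal_mul (iterK_nonneg q hq n j l), ih, hpq]
      have hsummable : Summable fun l => iterK q n j l * q l k := by
        have h1 : Summable fun l => (eIter p n j l * p l k).toReal :=
          ENNReal.summable_toReal hfin
        refine h1.congr fun l => ?_
        rw [hterm l, ENNReal.toReal_ofReal (mul_nonneg (iterK_nonneg q hq n j l) (hq l k))]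
      calc ENNReal.ofReal (iterK q (n+1) j k)
          = ENNReal.ofReal (∑' l, iterK q n j l * q l k) := rfl
        _ = ∑' l, ENNReal.ofReal (iterK q n j l * q l k) :=
            ENNReal.ofReal_tsum_of_nonneg
              (fun l => mul_nonneg (iterK_nonneg q hq n j l) (hq l k)) hsummable
        _ = ∑' l, eIter p n j l * p l k := tsum_congr fun l => (hterm l).symm
        _ = eIter p (n+1) j k := rfl

lemma eIter_shift {T : Type*} [DecidableEq T] (e : S ≃ T)
    (p : S → S → ℝ≥0∞) (p' : T → T → ℝ≥0∞)
    (h : ∀ a b, p a b = p' (e a) (e b)) (n : ℕ) (a b : S) :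
    eIter p n a b = eIter p' n (e a) (e b) := by
  induction n generalizing b with
  | zero => simp [Equiv.apply_eq_iff_eq]
  | succ n ih =>
      rw [eIter_succ, eIter_succ, ← e.tsum_eq (fun l => eIter p' n (e a) l * p' l (e b))]
      exact tsum_congr fun l => by rw [ih, h]

/-! ### misc helpers -/

lemma ofReal_zpow {x : ℝ} (hx : 0 < x) (n : ℤ) :
    ENNReal.ofReal (x ^ n) = ENNReal.ofReal x ^ n := by
  cases n with
  | ofNat n => simp only [Int.ofNat_eq_coe, zpow_natCast]; exact ENNReal.ofReal_pow hx.le n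
  | negSucc n =>
      rw [zpow_negSucc, zpow_negSucc, ENNReal.ofReal_inv_of_pos (pow_pos hx _),
        ENNReal.ofReal_pow hx.le]

lemma zpow_ne_top {a : ℝ≥0∞} (h0 : a ≠ 0) (ht : a ≠ ∞) (n : ℤ) : a ^ n ≠ ∞ := by
  cases n with
  | ofNat n => simpa [Int.ofNat_eq_coe, zpow_natCast] using ENNReal.pow_ne_top ht
  | negSucc n => rw [zpow_negSucc]; exact ENNReal.inv_ne_top.2 (pow_ne_zero _ h0)

lemma mul_zpow_ennreal {a b : ℝ≥0∞} (ha0 : a ≠ 0) (hat : a ≠ ∞) (hb0 : b ≠ 0) (hbt : b ≠ ∞)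
    (n : ℤ) : (a * b) ^ n = a ^ n * b ^ n := by
  cases n with
  | ofNat n => simpa [Int.ofNat_eq_coe, zpow_natCast] using mul_pow a b n
  | negSucc n =>
      rw [zpow_negSucc, zpow_negSucc, zpow_negSucc, mul_pow,
        ENNReal.mul_inv (Or.inl (pow_ne_zero _ ha0)) (Or.inl (ENNReal.pow_ne_top hat))]

lemma iterK_vanish (μ : ℤ × ℤ → ℝ) (hz : ∀ k : ℤ × ℤ, k.2 < 0 → μ k = 0) :
    ∀ (n : ℕ) (j k : ℤ × ℤ), k.2 < j.2 → iterK (homK μ) n j k = 0 := by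
  intro n
  induction n with
  | zero =>
      intro j k h
      rw [iterK_zero, if_neg]
      rintro rfl; exact lt_irrefl _ h
  | succ n ih =>
      intro j k h
      rw [iterK_succ]
      have : ∀ l : ℤ × ℤ, iterK (homK μ) n j l * homK μ l k = 0 := by
        intro l
        rcases lt_or_ge l.2 j.2 with hl | hl
        · rw [ih j l hl, zero_mul]
        · have : homK μ l k = 0 := hz (k - l) (by simp only [Prod.snd_sub]; omega)
          rw [this, mul_zero]
      simp only [this, tsum_zero]

/-! ### 1-D kernels and hitting quantities -/

noncomputable def kill0 (w : ℤ → ℝ≥0∞) : ℤ → ℤ → ℝ≥0∞ := fun a b => if b = 0 then 0 else w (b - a)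
noncomputable def killNeg (w : ℤ → ℝ≥0∞) : ℤ → ℤ → ℝ≥0∞ := fun a b => if b ≤ 0 then 0 else w (b - a)
noncomputable def killLe (w : ℤ → ℝ≥0∞) (m : ℤ) : ℤ → ℤ → ℝ≥0∞ :=
  fun a b => if b ≤ m then 0 else w (b - a)
noncomputable def Dn (w : ℤ → ℝ≥0∞) (n : ℕ) (m : ℤ) : ℝ≥0∞ :=
  ∑' c, eIter (kill0 w) n m c * w (-c)
noncomputable def Hh (w : ℤ → ℝ≥0∞) (m : ℤ) : ℝ≥0∞ := ∑' n, Dn w n m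
noncomputable def Fp (w : ℤ → ℝ≥0∞) (m : ℤ) (s : ℕ) (a : ℤ) : ℝ≥0∞ :=
  ∑' l, eIter (killLe w m) s a l * w (m - l)

variable (w : ℤ → ℝ≥0∞)

lemma kill0_mass (hw1 : ∑' d, w d = 1) (a : ℤ) :
    (∑' b, kill0 w a b) + w (-a) = 1 := by
  have h : ∀ b : ℤ, w (b - a) = kill0 w a b + (if b = 0 then w (-a) else 0) := by
    intro b; by_cases hb : b = 0 <;> simp [kill0, hb]
  calc (∑' b, kill0 w a b) + w (-a)
      = (∑' b, kill0 w a b) + ∑' b : ℤ, (if b = 0 then w (-a) else 0) := by rw [tsum_ite_eq]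
    _ = ∑' b, w (b - a) := by
        rw [← ENNReal.tsum_add]; exact tsum_congr fun b => (h b).symm
    _ = ∑' d, w d := (Equiv.subRight a).tsum_eq w
    _ = 1 := hw1

lemma Dn_telescope (hw1 : ∑' d, w d = 1) (n : ℕ) (m : ℤ) :
    (∑' c, eIter (kill0 w) (n+1) m c) + Dn w n m = ∑' c, eIter (kill0 w) n m c := by
  have h1 : (∑' c, eIter (kill0 w) (n+1) m c)
      = ∑' l, eIter (kill0 w) n m l * ∑' c, kill0 w l c := by
    calc (∑' c, eIter (kill0 w) (n+1) m c)
        = ∑' c, ∑' l, eIter (kill0 w) n m l * kill0 w l c := rfl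
      _ = ∑' l, ∑' c, eIter (kill0 w) n m l * kill0 w l c := ENNReal.tsum_comm
      _ = _ := by simp only [ENNReal.tsum_mul_left]
  rw [h1, Dn, ← ENNReal.tsum_add]
  refine tsum_congr fun l => ?_
  rw [← mul_add, kill0_mass w hw1 l, mul_one]

lemma Dn_partial (hw1 : ∑' d, w d = 1) (m : ℤ) :
    ∀ N : ℕ, (∑ n ∈ Finset.range N, Dn w n m) + ∑' c, eIter (kill0 w) N m c = 1
  | 0 => by
      rw [Finset.range_zero, Finset.sum_empty, zero_add,
        tsum_eq_single m (fun c hc => by simp [Ne.symm hc])]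
      simp
  | (N+1) => by
      rw [Finset.sum_range_succ, add_assoc, add_comm (Dn w N m), Dn_telescope w hw1 N m]
      exact Dn_partial hw1 m N

lemma Hh_le_one (hw1 : ∑' d, w d = 1) (m : ℤ) : Hh w m ≤ 1 := by
  rw [Hh, ENNReal.tsum_eq_iSup_nat]
  exact iSup_le fun N => le_trans le_self_add (le_of_eq (Dn_partial w hw1 m N))

lemma Dn_zero (m : ℤ) : Dn w 0 m = w (-m) := by
  rw [Dn, tsum_eq_single m (fun c hc => by simp [Ne.symm hc])]
  simp

lemma Hh_rec (m : ℤ) :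
    Hh w m = w (-m) + ∑' c, kill0 w m c * Hh w c := by
  have hs : ∀ n, Dn w (n+1) m = ∑' l, kill0 w m l * Dn w n l := by
    intro n
    calc Dn w (n+1) m
        = ∑' c, (∑' l, kill0 w m l * eIter (kill0 w) n l c) * w (-c) := by
          simp only [Dn, eIter_succ_left]
      _ = ∑' c, ∑' l, kill0 w m l * (eIter (kill0 w) n l c * w (-c)) := by
          simp only [← ENNReal.tsum_mul_right, mul_assoc]
      _ = ∑' l, ∑' c, kill0 w m l * (eIter (kill0 w) n l c * w (-c)) := ENNReal.tsum_comm
      _ = ∑' l, kill0 w m l * Dn w n l := by simp only [ENNReal.tsum_mul_left]; rfl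
  calc Hh w m = Dn w 0 m + ∑' n, Dn w (n+1) m := tsum_eq_zero_add' ENNReal.summable
    _ = w (-m) + ∑' n, ∑' l, kill0 w m l * Dn w n l := by
        rw [Dn_zero]; exact congrArg _ (tsum_congr hs)
    _ = w (-m) + ∑' l, ∑' n, kill0 w m l * Dn w n l := by rw [ENNReal.tsum_comm]
    _ = w (-m) + ∑' l, kill0 w m l * Hh w l := by simp only [ENNReal.tsum_mul_left]; rfl

lemma eIter_kill0_nonpos (hw2 : ∀ d : ℤ, d < -1 → w d = 0) :
    ∀ (n : ℕ) (a b : ℤ), 1 ≤ a → b ≤ 0 → eIter (kill0 w) n a b = 0 := by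
  intro n
  induction n with
  | zero => intro a b ha hb; rw [eIter_zero, if_neg (by omega)]
  | succ n ih =>
      intro a b ha hb
      rw [eIter_succ]
      refine ENNReal.summable.tsum_eq_zero_iff.2 fun l => ?_
      by_cases hl : l ≤ 0
      · rw [ih a l ha hl, zero_mul]
      · have : kill0 w l b = 0 := by
          rcases eq_or_ne b 0 with hb0 | hb0
          · rw [kill0, if_pos hb0]
          · rw [kill0, if_neg hb0, hw2 _ (by omega)]
        rw [this, mul_zero]

lemma eIter_killNeg_eq (hw2 : ∀ d : ℤ, d < -1 → w d = 0) :
    ∀ (n : ℕ) (a b : ℤ), 1 ≤ a → eIter (killNeg w) n a b = eIter (kill0 w) n a b := by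
  intro n
  induction n with
  | zero => intro a b _; rfl
  | succ n ih =>
      intro a b ha
      rw [eIter_succ, eIter_succ]
      refine tsum_congr fun l => ?_
      by_cases hl : 1 ≤ l
      · rw [ih a l ha]
        rcases eq_or_ne b 0 with hb0 | hb0
        · rw [killNeg, kill0, if_pos hb0, if_pos (by omega)]
        · by_cases hbneg : b ≤ 0
          · rw [killNeg, kill0, if_pos hbneg, if_neg hb0, hw2 _ (by omega)]
          · rw [killNeg, kill0, if_neg hbneg, if_neg hb0]
      · have h1 : eIter (killNeg w) n a l = 0 := by
          cases n with
          | zero => rw [eIter_zero, if_neg (by omega)]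
          | succ n =>
              rw [eIter_succ]
              refine ENNReal.summable.tsum_eq_zero_iff.2 fun l' => ?_
              rw [killNeg, if_pos (by omega), mul_zero]
        have h2 : eIter (kill0 w) n a l = 0 := eIter_kill0_nonpos w hw2 n a l ha (by omega)
        rw [h1, h2, zero_mul, zero_mul]

lemma Fp_zero (m a : ℤ) : Fp w m 0 a = w (m - a) := by
  rw [Fp, tsum_eq_single a (fun l hl => by simp [Ne.symm hl])]
  simp

lemma Fp_succ (m : ℤ) (s : ℕ) (a : ℤ) :
    Fp w m (s+1) a = ∑' l, killLe w m a l * Fp w m s l := by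
  calc Fp w m (s+1) a
      = ∑' l, (∑' l', killLe w m a l' * eIter (killLe w m) s l' l) * w (m - l) := by
        simp only [Fp, eIter_succ_left]
    _ = ∑' l, ∑' l', killLe w m a l' * (eIter (killLe w m) s l' l * w (m - l)) := by
        simp only [← ENNReal.tsum_mul_right, mul_assoc]
    _ = ∑' l', ∑' l, killLe w m a l' * (eIter (killLe w m) s l' l * w (m - l)) :=
        ENNReal.tsum_comm
    _ = ∑' l', killLe w m a l' * Fp w m s l' := by simp only [ENNReal.tsum_mul_left]; rfl

lemma eIter_decomp (hw2 : ∀ d : ℤ, d < -1 → w d = 0) (m : ℤ) (hm : 1 ≤ m) :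
    ∀ (n : ℕ) (a c : ℤ), m + 1 ≤ a → c ≤ m →
    eIter (kill0 w) n a c
      = ∑ s ∈ Finset.range n, Fp w m s a * eIter (kill0 w) (n - s - 1) m c := by
  intro n
  induction n with
  | zero =>
      intro a c ha hc
      rw [eIter_zero, if_neg (by omega), Finset.range_zero, Finset.sum_empty]
  | succ n ih =>
      intro a c ha hc
      rw [eIter_succ_left]
      have hterm : ∀ l : ℤ, kill0 w a l * eIter (kill0 w) n l c
          = (if l = m then w (m - a) * eIter (kill0 w) n m c else 0)
            + killLe w m a l
              * ∑ s ∈ Finset.range n, Fp w m s l * eIter (kill0 w) (n - s - 1) m c := by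
        intro l
        by_cases hlm : l = m
        · subst hlm
          rw [if_pos rfl, kill0, if_neg (by omega), killLe, if_pos le_rfl, zero_mul, add_zero]
        · rw [if_neg hlm, zero_add]
          by_cases hl : m + 1 ≤ l
          · rw [ih l c hl hc, kill0, killLe, if_neg (by omega), if_neg (by omega)]
          · have h1 : kill0 w a l = 0 := by
              rcases eq_or_ne l 0 with hl0 | hl0
              · rw [kill0, if_pos hl0]
              · rw [kill0, if_neg hl0, hw2 _ (by omega)]
            have h2 : killLe w m a l = 0 := by rw [killLe, if_pos (by omega)]
            rw [h1, h2, zero_mul, zero_mul]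
      rw [tsum_congr hterm, ENNReal.tsum_add, tsum_ite_eq]
      have h3 : (∑' l, killLe w m a l
            * ∑ s ∈ Finset.range n, Fp w m s l * eIter (kill0 w) (n - s - 1) m c)
          = ∑ s ∈ Finset.range n, Fp w m (s+1) a * eIter (kill0 w) (n - s - 1) m c := by
        calc (∑' l, killLe w m a l
              * ∑ s ∈ Finset.range n, Fp w m s l * eIter (kill0 w) (n - s - 1) m c)
            = ∑' l, ∑ s ∈ Finset.range n,
                killLe w m a l * Fp w m s l * eIter (kill0 w) (n - s - 1) m c := by
              refine tsum_congr fun l => ?_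
              rw [Finset.mul_sum]
              exact Finset.sum_congr rfl fun s _ => by ring
          _ = ∑ s ∈ Finset.range n, ∑' l,
                killLe w m a l * Fp w m s l * eIter (kill0 w) (n - s - 1) m c :=
              Summable.tsum_finsetSum fun s _ => ENNReal.summable
          _ = ∑ s ∈ Finset.range n, Fp w m (s+1) a * eIter (kill0 w) (n - s - 1) m c := by
              refine Finset.sum_congr rfl fun s _ => ?_
              rw [Fp_succ, ← ENNReal.tsum_mul_right]
      rw [h3]
      rw [Finset.sum_range_succ' (fun s => Fp w m s a * eIter (kill0 w) (n + 1 - s - 1) m c) n]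
      have e0 : n + 1 - 0 - 1 = n := by omega
      have es : ∀ s, n + 1 - (s + 1) - 1 = n - s - 1 := fun s => by omega
      rw [e0, Fp_zero]
      rw [add_comm]
      congr 1
      exact Finset.sum_congr rfl fun s _ => by rw [es s]

lemma Dn_decomp (hw2 : ∀ d : ℤ, d < -1 → w d = 0) (m : ℤ) (hm : 1 ≤ m) (n : ℕ) :
    Dn w n (m+1) = ∑ s ∈ Finset.range n, Fp w m s (m+1) * Dn w (n - s - 1) m := by
  have hterm : ∀ c : ℤ, eIter (kill0 w) n (m+1) c * w (-c)
      = ∑ s ∈ Finset.range n, Fp w m s (m+1) * (eIter (kill0 w) (n - s - 1) m c * w (-c)) := by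
    intro c
    by_cases hc : c ≤ m
    · rw [eIter_decomp w hw2 m hm n (m+1) c le_rfl hc, Finset.sum_mul]
      exact Finset.sum_congr rfl fun s _ => by ring
    · have hzc : w (-c) = 0 := hw2 _ (by omega)
      simp [hzc]
  calc Dn w n (m+1) = ∑' c, ∑ s ∈ Finset.range n,
        Fp w m s (m+1) * (eIter (kill0 w) (n - s - 1) m c * w (-c)) := by
        rw [Dn]; exact tsum_congr hterm
    _ = ∑ s ∈ Finset.range n, ∑' c,
        Fp w m s (m+1) * (eIter (kill0 w) (n - s - 1) m c * w (-c)) :=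
        Summable.tsum_finsetSum fun s _ => ENNReal.summable
    _ = _ := by
        refine Finset.sum_congr rfl fun s _ => ?_
        rw [ENNReal.tsum_mul_left]; rfl

lemma tsum_conv (f g : ℕ → ℝ≥0∞) :
    ∑' n, ∑ s ∈ Finset.range n, f s * g (n - s - 1) = (∑' s, f s) * ∑' t, g t := by
  calc ∑' n, ∑ s ∈ Finset.range n, f s * g (n - s - 1)
      = ∑' n, ∑' s, (if s < n then f s * g (n - s - 1) else 0) := by
        refine tsum_congr fun n => ?_
        rw [tsum_eq_sum (s := Finset.range n) (fun s hs => if_neg (by simpa using hs))]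
        exact Finset.sum_congr rfl fun s hs => (if_pos (Finset.mem_range.mp hs)).symm
    _ = ∑' s, ∑' n, (if s < n then f s * g (n - s - 1) else 0) := ENNReal.tsum_comm
    _ = ∑' s, ∑' t, f s * g t := by
        refine tsum_congr fun s => ?_
        have hinj : Function.Injective (fun t : ℕ => s + 1 + t) := fun a b h => by
          simpa using h
        rw [← hinj.tsum_eq (f := fun n => if s < n then f s * g (n - s - 1) else 0) ?_]
        · refine tsum_congr fun t => ?_
          show (if s < s + 1 + t then f s * g (s + 1 + t - s - 1) else 0) = f s * g t
          rw [if_pos (by omega), show s + 1 + t - s - 1 = t by omega]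
        · intro n hn
          simp only [Function.mem_support] at hn
          have hsn : s < n := by by_contra h; exact hn (if_neg h)
          exact ⟨n - s - 1, by show s + 1 + (n - s - 1) = n; omega⟩
    _ = (∑' s, f s) * ∑' t, g t := by
        simp only [ENNReal.tsum_mul_left, ENNReal.tsum_mul_right]

lemma Fp_total (hw2 : ∀ d : ℤ, d < -1 → w d = 0) (m : ℤ) :
    ∑' s, Fp w m s (m+1) = Hh w 1 := by
  have hshift : ∀ (s : ℕ) (l : ℤ),
      eIter (killLe w m) s (m+1) l = eIter (killNeg w) s 1 (l - m) := by
    intro s l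
    have h := eIter_shift (Equiv.subRight m) (killLe w m) (killNeg w)
      (fun a b => by
        simp only [killLe, killNeg, Equiv.subRight_apply, sub_nonpos]
        rw [show b - m - (a - m) = b - a by ring]) s (m+1) l
    simpa using h
  have key : ∀ s, Fp w m s (m+1) = Dn w s 1 := by
    intro s
    calc Fp w m s (m+1) = ∑' l, eIter (killNeg w) s 1 (l - m) * w (m - l) := by
          simp only [Fp, hshift]
      _ = ∑' c, eIter (killNeg w) s 1 c * w (-c) := by
          rw [← (Equiv.addRight m).tsum_eq
            (fun l => eIter (killNeg w) s 1 (l - m) * w (m - l))]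
          refine tsum_congr fun c => ?_
          simp only [Equiv.coe_addRight, add_sub_cancel_right]
          rw [show m - (c + m) = -c by ring]
      _ = Dn w s 1 := by
          rw [Dn]
          exact tsum_congr fun c => by rw [eIter_killNeg_eq w hw2 s 1 c le_rfl]
  rw [tsum_congr key]; rfl

lemma Hh_mul (hw2 : ∀ d : ℤ, d < -1 → w d = 0) (m : ℤ) (hm : 1 ≤ m) :
    Hh w (m+1) = Hh w 1 * Hh w m := by
  calc Hh w (m+1)
      = ∑' n, ∑ s ∈ Finset.range n, Fp w m s (m+1) * Dn w (n - s - 1) m :=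
        tsum_congr (Dn_decomp w hw2 m hm)
    _ = (∑' s, Fp w m s (m+1)) * ∑' t, Dn w t m :=
        tsum_conv (fun s => Fp w m s (m+1)) (fun t => Dn w t m)
    _ = Hh w 1 * Hh w m := by rw [Fp_total w hw2 m]; rfl

lemma Hh_pow (hw2 : ∀ d : ℤ, d < -1 → w d = 0) :
    ∀ k : ℕ, Hh w ((k : ℤ) + 1) = Hh w 1 ^ (k + 1) := by
  intro k
  induction k with
  | zero => simp
  | succ k ih =>
      have hc : ((k + 1 : ℕ) : ℤ) + 1 = ((k : ℤ) + 1) + 1 := by push_cast; ring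
      rw [hc, Hh_mul w hw2 ((k : ℤ) + 1) (by omega), ih, pow_succ]
      ring

lemma Hh_one_pos (hpos : 0 < w (-1)) : Hh w 1 ≠ 0 := by
  intro h0
  have h2 : w (-1) ≤ Hh w 1 := by
    have h := ENNReal.le_tsum (f := fun n => Dn w n 1) 0
    rw [Dn_zero] at h
    exact h
  rw [h0] at h2
  exact hpos.ne' (le_antisymm h2 zero_le)

lemma q_phi (hw1 : ∑' d, w d = 1) (hw2 : ∀ d : ℤ, d < -1 → w d = 0)
    (hpos : 0 < w (-1)) :
    (∑' d : ℤ, w d * Hh w 1 ^ d) = 1 := by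
  set q := Hh w 1 with hqdef
  have hqle : q ≤ 1 := Hh_le_one w hw1 1
  have hqt : q ≠ ∞ := ne_top_of_le_ne_top ENNReal.one_ne_top hqle
  have hq0 : q ≠ 0 := Hh_one_pos w hpos
  have hrec : q = w (-1) + ∑' c, kill0 w 1 c * Hh w c := Hh_rec w 1
  have hsum1 : (∑' c : ℤ, kill0 w 1 c * Hh w c) = (∑' d : ℕ, w d * q ^ (d : ℤ)) * q := by
    have hinj : Function.Injective (fun d : ℕ => (d : ℤ) + 1) := fun a b h => by
      simpa using h
    have hsupp' : Function.support (fun c : ℤ => kill0 w 1 c * Hh w c)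
        ⊆ Set.range (fun d : ℕ => (d : ℤ) + 1) := by
      intro c hc
      simp only [Function.mem_support] at hc
      have h1 : 1 ≤ c := by
        by_contra hlt
        apply hc
        rcases eq_or_ne c 0 with h | h
        · rw [kill0, if_pos h, zero_mul]
        · rw [kill0, if_neg h, hw2 (c - 1) (by omega), zero_mul]
      exact ⟨(c - 1).toNat, by show ((c-1).toNat : ℤ) + 1 = c; omega⟩
    rw [← hinj.tsum_eq hsupp', ← ENNReal.tsum_mul_right]
    refine tsum_congr fun d => ?_
    show kill0 w 1 ((d : ℤ) + 1) * Hh w ((d : ℤ) + 1) = w d * q ^ (d : ℤ) * q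
    rw [kill0, if_neg (by omega), show ((d : ℤ) + 1) - 1 = (d : ℤ) by ring,
      Hh_pow w hw2 d, ← hqdef, zpow_natCast, pow_succ]
    ring
  have hdec : ∀ d : ℤ, w d * q ^ d
      = (if d = -1 then w (-1) * q ^ (-1 : ℤ) else 0)
        + (if 0 ≤ d then w d * q ^ d else 0) := by
    intro d
    rcases lt_trichotomy d (-1) with h | h | h
    · rw [hw2 d h, zero_mul, if_neg (by omega), if_neg (by omega), add_zero]
    · rw [if_pos h, if_neg (by omega), add_zero, h]
    · rw [if_neg (by omega), if_pos (by omega), zero_add]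
  have hnat : (∑' d : ℤ, if 0 ≤ d then w d * q ^ d else 0) = ∑' d : ℕ, w d * q ^ (d : ℤ) := by
    have hinj : Function.Injective (fun d : ℕ => (d : ℤ)) := fun a b h => by
      simpa using h
    rw [← hinj.tsum_eq ?_]
    · refine tsum_congr fun d => ?_
      show (if 0 ≤ (d : ℤ) then w d * q ^ (d : ℤ) else 0) = w d * q ^ (d : ℤ)
      rw [if_pos (Int.natCast_nonneg d)]
    · intro c hc
      simp only [Function.mem_support] at hc
      have h1 : 0 ≤ c := by by_contra hcl; exact hc (if_neg hcl)
      exact ⟨c.toNat, by show (c.toNat : ℤ) = c; omega⟩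
  have hqinv : q ^ (-1 : ℤ) = q⁻¹ := by
    rw [show (-1 : ℤ) = -(1 : ℤ) from rfl, ENNReal.zpow_neg q 1, zpow_one]
  calc (∑' d : ℤ, w d * q ^ d)
      = (∑' d : ℤ, if d = -1 then w (-1) * q ^ (-1 : ℤ) else 0)
        + ∑' d : ℤ, (if 0 ≤ d then w d * q ^ d else 0) := by
        rw [← ENNReal.tsum_add]; exact tsum_congr hdec
    _ = w (-1) * q⁻¹ + ∑' d : ℕ, w d * q ^ (d : ℤ) := by rw [tsum_ite_eq, hnat, hqinv]
    _ = w (-1) * q⁻¹ + (∑' d : ℕ, w d * q ^ (d : ℤ)) * q * q⁻¹ := by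
        rw [mul_assoc, ENNReal.mul_inv_cancel hq0 hqt, mul_one]
    _ = (w (-1) + (∑' d : ℕ, w d * q ^ (d : ℤ)) * q) * q⁻¹ := by rw [add_mul]
    _ = q * q⁻¹ := by rw [← hsum1, ← hrec]
    _ = 1 := ENNReal.mul_inv_cancel hq0 hqt

/-! ### 2-D kernels -/

noncomputable def killA (ν : ℤ × ℤ → ℝ≥0∞) : ℤ × ℤ → ℤ × ℤ → ℝ≥0∞ :=
  fun j k => if k.2 = 0 then 0 else ν (k - j)
noncomputable def marg (ν : ℤ × ℤ → ℝ≥0∞) : ℤ → ℝ≥0∞ := fun d => ∑' k₁ : ℤ, ν (k₁, d)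

lemma phi_prod (ν : ℤ × ℤ → ℝ≥0∞) (q : ℝ≥0∞) :
    (∑' k : ℤ × ℤ, ν k * q ^ k.2) = ∑' d : ℤ, marg ν d * q ^ d :=
  calc (∑' k : ℤ × ℤ, ν k * q ^ k.2)
      = ∑' a : ℤ, ∑' b : ℤ, ν (a, b) * q ^ b := ENNReal.tsum_prod'
    _ = ∑' b : ℤ, ∑' a : ℤ, ν (a, b) * q ^ b := ENNReal.tsum_comm
    _ = ∑' d : ℤ, marg ν d * q ^ d := tsum_congr fun d => ENNReal.tsum_mul_right

lemma eIter_killA_weight (μE : ℤ × ℤ → ℝ≥0∞) (xE YE : ℝ≥0∞)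
    (hx0 : xE ≠ 0) (hxt : xE ≠ ∞) (hy0 : YE ≠ 0) (hyt : YE ≠ ∞) (n : ℕ) (j l : ℤ × ℤ) :
    eIter (killA (fun k => μE k * xE ^ k.1 * YE ^ k.2)) n j l
      = eIter (killA μE) n j l * xE ^ (l.1 - j.1) * YE ^ (l.2 - j.2) := by
  induction n generalizing l with
  | zero =>
      by_cases h : j = l
      · subst h; simp
      · simp [h]
  | succ n ih =>
      by_cases hl : l.2 = 0
      · have h1 : eIter (killA (fun k => μE k * xE ^ k.1 * YE ^ k.2)) (n+1) j l = 0 := by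
          rw [eIter_succ]
          refine ENNReal.summable.tsum_eq_zero_iff.2 fun m => ?_
          rw [killA, if_pos hl, mul_zero]
        have h2 : eIter (killA μE) (n+1) j l = 0 := by
          rw [eIter_succ]
          refine ENNReal.summable.tsum_eq_zero_iff.2 fun m => ?_
          rw [killA, if_pos hl, mul_zero]
        rw [h1, h2, zero_mul, zero_mul]
      · rw [eIter_succ, eIter_succ, ← ENNReal.tsum_mul_right, ← ENNReal.tsum_mul_right]
        refine tsum_congr fun m => ?_
        rw [ih m, killA, killA, if_neg hl, if_neg hl]
        have e1 : (l - m).1 = l.1 - m.1 := rfl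
        have e2 : (l - m).2 = l.2 - m.2 := rfl
        calc eIter (killA μE) n j m * xE ^ (m.1 - j.1) * YE ^ (m.2 - j.2)
              * (μE (l - m) * xE ^ (l - m).1 * YE ^ (l - m).2)
            = eIter (killA μE) n j m * μE (l - m)
              * (xE ^ (m.1 - j.1) * xE ^ (l.1 - m.1)) * (YE ^ (m.2 - j.2) * YE ^ (l.2 - m.2)) := by
              rw [e1, e2]; ring
          _ = eIter (killA μE) n j m * μE (l - m) * xE ^ (l.1 - j.1) * YE ^ (l.2 - j.2) := by
              rw [← ENNReal.zpow_add hx0 hxt, ← ENNReal.zpow_add hy0 hyt,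
                show m.1 - j.1 + (l.1 - m.1) = l.1 - j.1 by ring,
                show m.2 - j.2 + (l.2 - m.2) = l.2 - j.2 by ring]

lemma eIter_killA_proj (ν : ℤ × ℤ → ℝ≥0∞) (n : ℕ) (j : ℤ × ℤ) (c : ℤ) :
    ∑' l₁ : ℤ, eIter (killA ν) n j (l₁, c) = eIter (kill0 (marg ν)) n j.2 c := by
  induction n generalizing c with
  | zero =>
      by_cases hc : j.2 = c
      · rw [tsum_eq_single j.1 (fun l₁ hl => by
          rw [eIter_zero, if_neg (by rintro rfl; exact hl rfl)]),
          eIter_zero, eIter_zero, if_pos hc, if_pos (show j = (j.1, c) by rw [← hc])]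
      · have : ∀ l₁ : ℤ, eIter (killA ν) 0 j (l₁, c) = 0 := fun l₁ => by
          rw [eIter_zero, if_neg (by rintro rfl; exact hc rfl)]
        rw [tsum_congr this, tsum_zero, eIter_zero, if_neg hc]
  | succ n ih =>
      calc ∑' l₁ : ℤ, eIter (killA ν) (n+1) j (l₁, c)
          = ∑' l₁ : ℤ, ∑' m : ℤ × ℤ, eIter (killA ν) n j m * killA ν m (l₁, c) := rfl
        _ = ∑' m : ℤ × ℤ, ∑' l₁ : ℤ, eIter (killA ν) n j m * killA ν m (l₁, c) :=
            ENNReal.tsum_comm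
        _ = ∑' m : ℤ × ℤ, eIter (killA ν) n j m * kill0 (marg ν) m.2 c := by
            refine tsum_congr fun m => ?_
            rw [ENNReal.tsum_mul_left]
            congr 1
            rcases eq_or_ne c 0 with hc | hc
            · simp [killA, kill0, hc]
            · have hterm : ∀ l₁ : ℤ, killA ν m (l₁, c) = ν (l₁ - m.1, c - m.2) := fun l₁ => by
                rw [killA]; rw [if_neg hc]; rfl
              rw [tsum_congr hterm, kill0, if_neg hc]
              exact (Equiv.subRight m.1).tsum_eq (fun t => ν (t, c - m.2))
        _ = ∑' m2 : ℤ, ∑' m1 : ℤ, eIter (killA ν) n j (m1, m2) * kill0 (marg ν) m2 c := by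
            rw [ENNReal.tsum_prod']; exact ENNReal.tsum_comm
        _ = ∑' m2 : ℤ, eIter (kill0 (marg ν)) n j.2 m2 * kill0 (marg ν) m2 c := by
            refine tsum_congr fun m2 => ?_
            rw [ENNReal.tsum_mul_right, ih]
        _ = eIter (kill0 (marg ν)) (n+1) j.2 c := rfl

lemma E_eval (μE : ℤ × ℤ → ℝ≥0∞) (xE YE : ℝ≥0∞)
    (hx0 : xE ≠ 0) (hxt : xE ≠ ∞) (hy0 : YE ≠ 0) (hyt : YE ≠ ∞) (j : ℤ × ℤ) :
    ∑' n : ℕ, ∑' k₁ : ℤ, (∑' l : ℤ × ℤ, eIter (killA μE) n j l * μE ((k₁, 0) - l)) * xE ^ k₁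
      = xE ^ j.1 * YE ^ j.2 * Hh (marg (fun k => μE k * xE ^ k.1 * YE ^ k.2)) j.2 := by
  have key : ∀ n : ℕ,
      (∑' k₁ : ℤ, (∑' l : ℤ × ℤ, eIter (killA μE) n j l * μE ((k₁, 0) - l)) * xE ^ k₁)
        = xE ^ j.1 * YE ^ j.2 * Dn (marg (fun k => μE k * xE ^ k.1 * YE ^ k.2)) n j.2 := by
    intro n
    have h1 : ∀ (k₁ : ℤ) (l : ℤ × ℤ),
        eIter (killA μE) n j l * μE ((k₁, 0) - l) * xE ^ k₁
          = xE ^ j.1 * YE ^ j.2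
            * (eIter (killA (fun k => μE k * xE ^ k.1 * YE ^ k.2)) n j l
               * ((fun k => μE k * xE ^ k.1 * YE ^ k.2) ((k₁, 0) - l))) := by
      intro k₁ l
      rw [eIter_killA_weight μE xE YE hx0 hxt hy0 hyt n j l]
      show eIter (killA μE) n j l * μE ((k₁, 0) - l) * xE ^ k₁
          = xE ^ j.1 * YE ^ j.2
            * (eIter (killA μE) n j l * xE ^ (l.1 - j.1) * YE ^ (l.2 - j.2)
               * (μE ((k₁, 0) - l) * xE ^ ((k₁, 0) - l : ℤ × ℤ).1 * YE ^ ((k₁, 0) - l : ℤ × ℤ).2))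
      rw [show ((k₁, 0) - l : ℤ × ℤ).1 = k₁ - l.1 from rfl,
          show ((k₁, 0) - l : ℤ × ℤ).2 = -l.2 by simp]
      have hx' : xE ^ (l.1 - j.1) * xE ^ (k₁ - l.1) = xE ^ (k₁ - j.1) := by
        rw [← ENNReal.zpow_add hx0 hxt]; congr 1; ring
      have hx'' : xE ^ j.1 * xE ^ (k₁ - j.1) = xE ^ k₁ := by
        rw [← ENNReal.zpow_add hx0 hxt]; congr 1; ring
      have hy' : YE ^ (l.2 - j.2) * YE ^ (-l.2) = YE ^ (-j.2) := by
        rw [← ENNReal.zpow_add hy0 hyt]; congr 1; ring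
      have hy'' : YE ^ j.2 * YE ^ (-j.2) = 1 := by
        rw [← ENNReal.zpow_add hy0 hyt, add_neg_cancel, zpow_zero]
      calc eIter (killA μE) n j l * μE ((k₁, 0) - l) * xE ^ k₁
          = eIter (killA μE) n j l * μE ((k₁, 0) - l)
              * (xE ^ j.1 * (xE ^ (l.1 - j.1) * xE ^ (k₁ - l.1))) * 1 := by
            rw [hx', hx'', mul_one]
        _ = eIter (killA μE) n j l * μE ((k₁, 0) - l)
              * (xE ^ j.1 * (xE ^ (l.1 - j.1) * xE ^ (k₁ - l.1)))
              * (YE ^ j.2 * (YE ^ (l.2 - j.2) * YE ^ (-l.2))) := by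
            rw [hy', hy'']
        _ = xE ^ j.1 * YE ^ j.2
            * (eIter (killA μE) n j l * xE ^ (l.1 - j.1) * YE ^ (l.2 - j.2)
               * (μE ((k₁, 0) - l) * xE ^ (k₁ - l.1) * YE ^ (-l.2))) := by
            ring
    have h2 : ∀ l : ℤ × ℤ,
        (∑' k₁ : ℤ, (fun k => μE k * xE ^ k.1 * YE ^ k.2) ((k₁, 0) - l))
          = marg (fun k => μE k * xE ^ k.1 * YE ^ k.2) (-l.2) := by
      intro l
      have hrw : ∀ k₁ : ℤ, ((k₁, 0) - l : ℤ × ℤ) = (k₁ - l.1, -l.2) := by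
        intro k₁
        refine Prod.ext rfl ?_
        simp
      calc (∑' k₁ : ℤ, (fun k => μE k * xE ^ k.1 * YE ^ k.2) ((k₁, 0) - l))
          = ∑' k₁ : ℤ, (fun k => μE k * xE ^ k.1 * YE ^ k.2) (k₁ - l.1, -l.2) :=
            tsum_congr fun k₁ => by rw [hrw k₁]
        _ = marg (fun k => μE k * xE ^ k.1 * YE ^ k.2) (-l.2) :=
            (Equiv.subRight l.1).tsum_eq (fun t => (fun k => μE k * xE ^ k.1 * YE ^ k.2) (t, -l.2))
    calc (∑' k₁ : ℤ, (∑' l : ℤ × ℤ, eIter (killA μE) n j l * μE ((k₁, 0) - l)) * xE ^ k₁)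
        = ∑' k₁ : ℤ, ∑' l : ℤ × ℤ, eIter (killA μE) n j l * μE ((k₁, 0) - l) * xE ^ k₁ := by
          simp only [← ENNReal.tsum_mul_right]
      _ = ∑' k₁ : ℤ, ∑' l : ℤ × ℤ, xE ^ j.1 * YE ^ j.2
            * (eIter (killA (fun k => μE k * xE ^ k.1 * YE ^ k.2)) n j l
               * ((fun k => μE k * xE ^ k.1 * YE ^ k.2) ((k₁, 0) - l))) :=
          tsum_congr fun k₁ => tsum_congr fun l => h1 k₁ l
      _ = xE ^ j.1 * YE ^ j.2 * ∑' k₁ : ℤ, ∑' l : ℤ × ℤ,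
            eIter (killA (fun k => μE k * xE ^ k.1 * YE ^ k.2)) n j l
              * ((fun k => μE k * xE ^ k.1 * YE ^ k.2) ((k₁, 0) - l)) := by
          simp only [ENNReal.tsum_mul_left]
      _ = xE ^ j.1 * YE ^ j.2 * ∑' l : ℤ × ℤ,
            eIter (killA (fun k => μE k * xE ^ k.1 * YE ^ k.2)) n j l
              * marg (fun k => μE k * xE ^ k.1 * YE ^ k.2) (-l.2) := by
          congr 1
          rw [ENNReal.tsum_comm]
          exact tsum_congr fun l => by rw [ENNReal.tsum_mul_left, h2 l]
      _ = xE ^ j.1 * YE ^ j.2 * ∑' c : ℤ, (∑' l₁ : ℤ,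
            eIter (killA (fun k => μE k * xE ^ k.1 * YE ^ k.2)) n j (l₁, c))
              * marg (fun k => μE k * xE ^ k.1 * YE ^ k.2) (-c) := by
          congr 1
          rw [ENNReal.tsum_prod', ENNReal.tsum_comm]
          refine tsum_congr fun c => ?_
          rw [← ENNReal.tsum_mul_right]
      _ = xE ^ j.1 * YE ^ j.2 * Dn (marg (fun k => μE k * xE ^ k.1 * YE ^ k.2)) n j.2 := by
          congr 1
          rw [Dn]
          exact tsum_congr fun c => by rw [eIter_killA_proj]
  rw [tsum_congr key, ENNReal.tsum_mul_left]
  rfl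

/-- The 1-D weight function associated to `μ`, `x`, `y`. -/
noncomputable def wOf (μ : ℤ × ℤ → ℝ) (x y : ℝ) : ℤ → ℝ≥0∞ :=
  marg (fun k => ENNReal.ofReal (μ k) * ENNReal.ofReal x ^ k.1 * ENNReal.ofReal y ^ k.2)

end RWaux

set_option maxHeartbeats 2000000 in
/-- Probabilistic representation of `Y₁`: for the homogeneous random walk on `ℤ²` with
irreducible jump law `μ`, downward second-coordinate jumps at most `1`, and generating
function finite near the compact level set `D` of nonempty interior,
`E_j[x^{S₁(τ₁)} ; τ₁ < ∞] = x^{j₁} · Y₁(x)^{j₂}` for `j₂ > 0` and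
`x` in the projection of `D`, where `Y₁(x)` is the smallest positive root of `P(x,·) = 1`. -/
theorem probabilistic_representation_Y1
    (μ : ℤ × ℤ → ℝ)
    (hnn : ∀ k, 0 ≤ μ k) (hprob : ∑' k : ℤ × ℤ, μ k = 1)
    (hsupp : ∀ k : ℤ × ℤ, k.2 < -1 → μ k = 0)
    (hirr : ∀ j k : ℤ × ℤ, ∃ n, 0 < iterK (homK μ) n j k)
    (hcpt : IsCompact {q : ℝ × ℝ | 0 < q.1 ∧ 0 < q.2 ∧ genG μ q.1 q.2 ≤ 1})
    (hint : (interior {q : ℝ × ℝ | 0 < q.1 ∧ 0 < q.2 ∧ genG μ q.1 q.2 ≤ 1}).Nonempty)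
    (hfin : ∃ U : Set (ℝ × ℝ), IsOpen U ∧
      {q : ℝ × ℝ | 0 < q.1 ∧ 0 < q.2 ∧ genG μ q.1 q.2 ≤ 1} ⊆ U ∧
      ∀ q ∈ U, Summable (fun k : ℤ × ℤ => μ k * q.1 ^ k.1 * q.2 ^ k.2))
    (x Y₁ : ℝ) (hx : 0 < x) (hxproj : ∃ y : ℝ, 0 < y ∧ genG μ x y ≤ 1)
    (hY₁pos : 0 < Y₁) (hY₁root : genG μ x Y₁ = 1)
    (hY₁min : ∀ y : ℝ, 0 < y → genG μ x y = 1 → Y₁ ≤ y) :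
    ∀ j : ℤ × ℤ, 0 < j.2 → hitExp μ x j = x ^ j.1 * Y₁ ^ j.2 := by
  classical
  intro j hj
  obtain ⟨U, hUopen, hUsub, hUsum⟩ := hfin
  have hμsum : Summable μ := by
    by_contra h
    rw [tsum_eq_zero_of_not_summable h] at hprob
    norm_num at hprob
  have hμE1 : (∑' k : ℤ × ℤ, ENNReal.ofReal (μ k)) = 1 := by
    rw [← ENNReal.ofReal_tsum_of_nonneg hnn hμsum, hprob, ENNReal.ofReal_one]
  have hx0 : ENNReal.ofReal x ≠ 0 := by
    simp only [ne_eq, ENNReal.ofReal_eq_zero, not_le]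
    exact hx
  have hxt : ENNReal.ofReal x ≠ ∞ := ENNReal.ofReal_ne_top
  have hy0 : ENNReal.ofReal Y₁ ≠ 0 := by
    simp only [ne_eq, ENNReal.ofReal_eq_zero, not_le]
    exact hY₁pos
  have hyt : ENNReal.ofReal Y₁ ≠ ∞ := ENNReal.ofReal_ne_top
  have hterm1 : ∀ k : ℤ × ℤ, ENNReal.ofReal (μ k * x ^ k.1 * Y₁ ^ k.2)
      = ENNReal.ofReal (μ k) * ENNReal.ofReal x ^ k.1 * ENNReal.ofReal Y₁ ^ k.2 := by
    intro k
    rw [ENNReal.ofReal_mul (mul_nonneg (hnn k) (zpow_nonneg hx.le _)),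
        ENNReal.ofReal_mul (hnn k), RWaux.ofReal_zpow hx, RWaux.ofReal_zpow hY₁pos]
  have hmemD : ((x, Y₁) : ℝ × ℝ) ∈ {q : ℝ × ℝ | 0 < q.1 ∧ 0 < q.2 ∧ genG μ q.1 q.2 ≤ 1} :=
    ⟨hx, hY₁pos, le_of_eq hY₁root⟩
  have hνsumR : Summable (fun k : ℤ × ℤ => μ k * x ^ k.1 * Y₁ ^ k.2) :=
    hUsum (x, Y₁) (hUsub hmemD)
  have hνE1 : (∑' k : ℤ × ℤ,
      ENNReal.ofReal (μ k) * ENNReal.ofReal x ^ k.1 * ENNReal.ofReal Y₁ ^ k.2) = 1 := by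
    rw [← tsum_congr hterm1, ← ENNReal.ofReal_tsum_of_nonneg
        (fun k => mul_nonneg (mul_nonneg (hnn k) (zpow_nonneg hx.le _)) (zpow_nonneg hY₁pos.le _))
        hνsumR,
      show (∑' k : ℤ × ℤ, μ k * x ^ k.1 * Y₁ ^ k.2) = genG μ x Y₁ from rfl, hY₁root,
      ENNReal.ofReal_one]
  -- the 1-D weight facts
  have hw1 : (∑' d : ℤ, RWaux.wOf μ x Y₁ d) = 1 := by
    refine Eq.trans ?_ hνE1
    exact (calc (∑' k : ℤ × ℤ,
          ENNReal.ofReal (μ k) * ENNReal.ofReal x ^ k.1 * ENNReal.ofReal Y₁ ^ k.2)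
        = ∑' a : ℤ, ∑' b : ℤ,
            ENNReal.ofReal (μ (a, b)) * ENNReal.ofReal x ^ a * ENNReal.ofReal Y₁ ^ b :=
          ENNReal.tsum_prod'
      _ = ∑' b : ℤ, ∑' a : ℤ,
            ENNReal.ofReal (μ (a, b)) * ENNReal.ofReal x ^ a * ENNReal.ofReal Y₁ ^ b :=
          ENNReal.tsum_comm).symm
  have hw2 : ∀ d : ℤ, d < -1 → RWaux.wOf μ x Y₁ d = 0 := by
    intro d hd
    have h : ∀ k₁ : ℤ,
        ENNReal.ofReal (μ (k₁, d)) * ENNReal.ofReal x ^ k₁ * ENNReal.ofReal Y₁ ^ d = 0 := by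
      intro k₁
      rw [hsupp (k₁, d) hd, ENNReal.ofReal_zero, zero_mul, zero_mul]
    exact ENNReal.summable.tsum_eq_zero_iff.2 h
  obtain ⟨k₀, hk₀⟩ : ∃ k₁ : ℤ, 0 < μ (k₁, -1) := by
    by_contra hcon
    push_neg at hcon
    have hz : ∀ k : ℤ × ℤ, k.2 < 0 → μ k = 0 := by
      intro k hk
      rcases eq_or_lt_of_le (show k.2 ≤ -1 by omega) with h1 | h1
      · have hke : k = (k.1, -1) := by rw [← h1]
        rw [hke]
        exact le_antisymm (hcon k.1) (hnn _)
      · exact hsupp k h1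
    obtain ⟨n, hn⟩ := hirr (0, 1) (0, 0)
    rw [RWaux.iterK_vanish μ hz n (0, 1) (0, 0) (show (0 : ℤ) < 1 by norm_num)] at hn
    exact lt_irrefl 0 hn
  have hpos : 0 < RWaux.wOf μ x Y₁ (-1) := by
    have h1 : (0 : ℝ≥0∞) < ENNReal.ofReal (μ (k₀, -1)) * ENNReal.ofReal x ^ k₀
        * ENNReal.ofReal Y₁ ^ (-1 : ℤ) :=
      ENNReal.mul_pos
        (ENNReal.mul_pos (ENNReal.ofReal_pos.2 hk₀).ne' (ENNReal.zpow_pos hx0 hxt k₀).ne').ne'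
        (ENNReal.zpow_pos hy0 hyt (-1)).ne'
    exact lt_of_lt_of_le h1 (ENNReal.le_tsum k₀)
  have hphi := RWaux.q_phi (RWaux.wOf μ x Y₁) hw1 hw2 hpos
  have hq0 : RWaux.Hh (RWaux.wOf μ x Y₁) 1 ≠ 0 := RWaux.Hh_one_pos _ hpos
  have hqle : RWaux.Hh (RWaux.wOf μ x Y₁) 1 ≤ 1 := RWaux.Hh_le_one _ hw1 1
  have hqt : RWaux.Hh (RWaux.wOf μ x Y₁) 1 ≠ ∞ := ne_top_of_le_ne_top ENNReal.one_ne_top hqle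
  have hqR0 : 0 < (RWaux.Hh (RWaux.wOf μ x Y₁) 1).toReal := ENNReal.toReal_pos hq0 hqt
  have hofq : ENNReal.ofReal (RWaux.Hh (RWaux.wOf μ x Y₁) 1).toReal
      = RWaux.Hh (RWaux.wOf μ x Y₁) 1 := ENNReal.ofReal_toReal hqt
  have hyq0 : 0 < Y₁ * (RWaux.Hh (RWaux.wOf μ x Y₁) 1).toReal := mul_pos hY₁pos hqR0
  have hT : (∑' k : ℤ × ℤ,
      (ENNReal.ofReal (μ k) * ENNReal.ofReal x ^ k.1 * ENNReal.ofReal Y₁ ^ k.2)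
        * RWaux.Hh (RWaux.wOf μ x Y₁) 1 ^ k.2) = 1 := by
    refine Eq.trans (RWaux.phi_prod _ _) ?_
    exact hphi
  have htermYq : ∀ k : ℤ × ℤ,
      ENNReal.ofReal (μ k * x ^ k.1 * (Y₁ * (RWaux.Hh (RWaux.wOf μ x Y₁) 1).toReal) ^ k.2)
        = (ENNReal.ofReal (μ k) * ENNReal.ofReal x ^ k.1 * ENNReal.ofReal Y₁ ^ k.2)
            * RWaux.Hh (RWaux.wOf μ x Y₁) 1 ^ k.2 := by
    intro k
    rw [ENNReal.ofReal_mul (mul_nonneg (hnn k) (zpow_nonneg hx.le _)),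
      ENNReal.ofReal_mul (hnn k), RWaux.ofReal_zpow hx, RWaux.ofReal_zpow hyq0,
      ENNReal.ofReal_mul hY₁pos.le, hofq,
      RWaux.mul_zpow_ennreal hy0 hyt hq0 hqt]
    ring
  have hnn3 : ∀ k : ℤ × ℤ,
      0 ≤ μ k * x ^ k.1 * (Y₁ * (RWaux.Hh (RWaux.wOf μ x Y₁) 1).toReal) ^ k.2 :=
    fun k => mul_nonneg (mul_nonneg (hnn k) (zpow_nonneg hx.le _)) (zpow_nonneg hyq0.le _)
  have hgen : genG μ x (Y₁ * (RWaux.Hh (RWaux.wOf μ x Y₁) 1).toReal) = 1 := by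
    have hT' : (∑' k : ℤ × ℤ, ENNReal.ofReal
        (μ k * x ^ k.1 * (Y₁ * (RWaux.Hh (RWaux.wOf μ x Y₁) 1).toReal) ^ k.2)) = 1 := by
      rw [tsum_congr htermYq]; exact hT
    have hfin2 : (∑' k : ℤ × ℤ, ENNReal.ofReal
        (μ k * x ^ k.1 * (Y₁ * (RWaux.Hh (RWaux.wOf μ x Y₁) 1).toReal) ^ k.2)) ≠ ∞ := by
      rw [hT']; exact ENNReal.one_ne_top
    have hsum2 : Summable (fun k : ℤ × ℤ =>
        μ k * x ^ k.1 * (Y₁ * (RWaux.Hh (RWaux.wOf μ x Y₁) 1).toReal) ^ k.2) := by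
      have h1 := ENNReal.summable_toReal hfin2
      refine h1.congr fun k => ?_
      rw [ENNReal.toReal_ofReal (hnn3 k)]
    have h3 : ENNReal.ofReal
        (genG μ x (Y₁ * (RWaux.Hh (RWaux.wOf μ x Y₁) 1).toReal)) = 1 := by
      rw [show genG μ x (Y₁ * (RWaux.Hh (RWaux.wOf μ x Y₁) 1).toReal)
          = ∑' k : ℤ × ℤ, μ k * x ^ k.1
            * (Y₁ * (RWaux.Hh (RWaux.wOf μ x Y₁) 1).toReal) ^ k.2 from rfl,
        ENNReal.ofReal_tsum_of_nonneg hnn3 hsum2, hT']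
    have h4 := congrArg ENNReal.toReal h3
    rwa [ENNReal.toReal_ofReal
      (show (0:ℝ) ≤ genG μ x (Y₁ * (RWaux.Hh (RWaux.wOf μ x Y₁) 1).toReal)
        from tsum_nonneg hnn3), ENNReal.toReal_one] at h4
  have hle : Y₁ ≤ Y₁ * (RWaux.Hh (RWaux.wOf μ x Y₁) 1).toReal := hY₁min _ hyq0 hgen
  have h1q : (1 : ℝ) ≤ (RWaux.Hh (RWaux.wOf μ x Y₁) 1).toReal := by nlinarith
  have hle2 : (RWaux.Hh (RWaux.wOf μ x Y₁) 1).toReal ≤ 1 := by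
    have h := ENNReal.toReal_mono ENNReal.one_ne_top hqle
    simpa using h
  have hq1 : RWaux.Hh (RWaux.wOf μ x Y₁) 1 = 1 := by
    rw [← hofq, le_antisymm hle2 h1q, ENNReal.ofReal_one]
  obtain ⟨kk, hkk⟩ : ∃ kk : ℕ, j.2 = (kk : ℤ) + 1 := ⟨(j.2 - 1).toNat, by omega⟩
  have hHj : RWaux.Hh (RWaux.wOf μ x Y₁) j.2 = 1 := by
    rw [hkk, RWaux.Hh_pow _ hw2 kk, hq1, one_pow]
  -- transfer to the real-valued statement
  have hAKnn : ∀ a b : ℤ × ℤ, 0 ≤ axisKillK μ a b := by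
    intro a b
    by_cases h : b.2 = 0 <;> simp [axisKillK, h] <;> exact hnn _
  have hKmass : ∀ l : ℤ × ℤ,
      (∑' k : ℤ × ℤ, RWaux.killA (fun k' => ENNReal.ofReal (μ k')) l k) ≤ 1 := by
    intro l
    calc (∑' k : ℤ × ℤ, RWaux.killA (fun k' => ENNReal.ofReal (μ k')) l k)
        ≤ ∑' k : ℤ × ℤ, ENNReal.ofReal (μ (k - l)) := by
          refine ENNReal.tsum_le_tsum fun k => ?_
          rw [RWaux.killA]
          split
          · exact zero_le
          · exact le_rfl
      _ = ∑' k : ℤ × ℤ, ENNReal.ofReal (μ k) :=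
          (Equiv.subRight l).tsum_eq (fun k => ENNReal.ofReal (μ k))
      _ = 1 := hμE1
  have hpq : ∀ a b : ℤ × ℤ, RWaux.killA (fun k' => ENNReal.ofReal (μ k')) a b
      = ENNReal.ofReal (axisKillK μ a b) := by
    intro a b
    by_cases h : b.2 = 0 <;> simp [RWaux.killA, axisKillK, h]
  have hofIter : ∀ (n : ℕ) (l : ℤ × ℤ), ENNReal.ofReal (iterK (axisKillK μ) n j l)
      = RWaux.eIter (RWaux.killA (fun k' => ENNReal.ofReal (μ k'))) n j l :=
    fun n l => RWaux.ofReal_iterK (axisKillK μ) hAKnn _ hpq hKmass n j l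
  have hμEle1 : ∀ k : ℤ × ℤ, ENNReal.ofReal (μ k) ≤ 1 := fun k =>
    le_trans (ENNReal.le_tsum k) (le_of_eq hμE1)
  have hEval0 : (∑' n : ℕ, ∑' k₁ : ℤ, (∑' l : ℤ × ℤ,
        RWaux.eIter (RWaux.killA (fun k' => ENNReal.ofReal (μ k'))) n j l
          * ENNReal.ofReal (μ ((k₁, 0) - l))) * ENNReal.ofReal x ^ k₁)
      = ENNReal.ofReal x ^ j.1 * ENNReal.ofReal Y₁ ^ j.2 :=
    calc (∑' n : ℕ, ∑' k₁ : ℤ, (∑' l : ℤ × ℤ,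
        RWaux.eIter (RWaux.killA (fun k' => ENNReal.ofReal (μ k'))) n j l
          * ENNReal.ofReal (μ ((k₁, 0) - l))) * ENNReal.ofReal x ^ k₁)
        = ENNReal.ofReal x ^ j.1 * ENNReal.ofReal Y₁ ^ j.2
            * RWaux.Hh (RWaux.wOf μ x Y₁) j.2 :=
          RWaux.E_eval (fun k' => ENNReal.ofReal (μ k')) (ENNReal.ofReal x)
            (ENNReal.ofReal Y₁) hx0 hxt hy0 hyt j
      _ = ENNReal.ofReal x ^ j.1 * ENNReal.ofReal Y₁ ^ j.2 := by rw [hHj, mul_one]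
  have hEfin : (∑' n : ℕ, ∑' k₁ : ℤ, (∑' l : ℤ × ℤ,
        RWaux.eIter (RWaux.killA (fun k' => ENNReal.ofReal (μ k'))) n j l
          * ENNReal.ofReal (μ ((k₁, 0) - l))) * ENNReal.ofReal x ^ k₁) ≠ ∞ := by
    rw [hEval0]
    exact ENNReal.mul_ne_top (RWaux.zpow_ne_top hx0 hxt _) (RWaux.zpow_ne_top hy0 hyt _)
  have hinner : ∀ (n : ℕ) (k₁ : ℤ),
      ENNReal.ofReal (∑' l : ℤ × ℤ, iterK (axisKillK μ) n j l * homK μ l (k₁, 0))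
        = ∑' l : ℤ × ℤ, RWaux.eIter (RWaux.killA (fun k' => ENNReal.ofReal (μ k'))) n j l
            * ENNReal.ofReal (μ ((k₁, 0) - l)) := by
    intro n k₁
    have hterm : ∀ l : ℤ × ℤ,
        RWaux.eIter (RWaux.killA (fun k' => ENNReal.ofReal (μ k'))) n j l
            * ENNReal.ofReal (μ ((k₁, 0) - l))
          = ENNReal.ofReal (iterK (axisKillK μ) n j l * homK μ l (k₁, 0)) := by
      intro l
      rw [ENNReal.ofReal_mul (RWaux.iterK_nonneg _ hAKnn n j l), hofIter n l]
      rfl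
    have hfin : (∑' l : ℤ × ℤ,
        RWaux.eIter (RWaux.killA (fun k' => ENNReal.ofReal (μ k'))) n j l
          * ENNReal.ofReal (μ ((k₁, 0) - l))) ≠ ∞ := by
      refine ne_top_of_le_ne_top ENNReal.one_ne_top ?_
      calc (∑' l : ℤ × ℤ,
          RWaux.eIter (RWaux.killA (fun k' => ENNReal.ofReal (μ k'))) n j l
            * ENNReal.ofReal (μ ((k₁, 0) - l)))
          ≤ ∑' l : ℤ × ℤ,
            RWaux.eIter (RWaux.killA (fun k' => ENNReal.ofReal (μ k'))) n j l * 1 :=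
            ENNReal.tsum_le_tsum fun l => mul_le_mul_right (hμEle1 _) _
        _ ≤ 1 := by simpa using RWaux.eIter_mass_le _ hKmass n j
    have hsummable : Summable (fun l : ℤ × ℤ => iterK (axisKillK μ) n j l * homK μ l (k₁, 0)) := by
      have h1 := ENNReal.summable_toReal hfin
      refine h1.congr fun l => ?_
      rw [hterm l, ENNReal.toReal_ofReal
        (mul_nonneg (RWaux.iterK_nonneg _ hAKnn n j l) (show (0:ℝ) ≤ homK μ l (k₁, 0) from hnn _))]
    rw [ENNReal.ofReal_tsum_of_nonneg
      (fun l => mul_nonneg (RWaux.iterK_nonneg _ hAKnn n j l) (show (0:ℝ) ≤ homK μ l (k₁, 0) from hnn _)) hsummable]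
    exact (tsum_congr hterm).symm
  have hBfin : ∀ n : ℕ, (∑' k₁ : ℤ, (∑' l : ℤ × ℤ,
      RWaux.eIter (RWaux.killA (fun k' => ENNReal.ofReal (μ k'))) n j l
        * ENNReal.ofReal (μ ((k₁, 0) - l))) * ENNReal.ofReal x ^ k₁) ≠ ∞ :=
    fun n => ne_top_of_le_ne_top hEfin (ENNReal.le_tsum n)
  have hnn4 : ∀ (n : ℕ) (k₁ : ℤ),
      0 ≤ (∑' l : ℤ × ℤ, iterK (axisKillK μ) n j l * homK μ l (k₁, 0)) * x ^ k₁ :=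
    fun n k₁ => mul_nonneg
      (tsum_nonneg fun l => mul_nonneg (RWaux.iterK_nonneg _ hAKnn n j l) (show (0:ℝ) ≤ homK μ l (k₁, 0) from hnn _))
      (zpow_nonneg hx.le _)
  have hlayer2 : ∀ n : ℕ,
      ENNReal.ofReal (∑' k₁ : ℤ,
          (∑' l : ℤ × ℤ, iterK (axisKillK μ) n j l * homK μ l (k₁, 0)) * x ^ k₁)
        = ∑' k₁ : ℤ, (∑' l : ℤ × ℤ,
            RWaux.eIter (RWaux.killA (fun k' => ENNReal.ofReal (μ k'))) n j l
              * ENNReal.ofReal (μ ((k₁, 0) - l))) * ENNReal.ofReal x ^ k₁ := by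
    intro n
    have hterm : ∀ k₁ : ℤ, (∑' l : ℤ × ℤ,
        RWaux.eIter (RWaux.killA (fun k' => ENNReal.ofReal (μ k'))) n j l
          * ENNReal.ofReal (μ ((k₁, 0) - l))) * ENNReal.ofReal x ^ k₁
        = ENNReal.ofReal
            ((∑' l : ℤ × ℤ, iterK (axisKillK μ) n j l * homK μ l (k₁, 0)) * x ^ k₁) := by
      intro k₁
      rw [ENNReal.ofReal_mul
        (tsum_nonneg fun l => mul_nonneg (RWaux.iterK_nonneg _ hAKnn n j l) (show (0:ℝ) ≤ homK μ l (k₁, 0) from hnn _)),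
        hinner n k₁, RWaux.ofReal_zpow hx]
    have hsummable : Summable (fun k₁ : ℤ =>
        (∑' l : ℤ × ℤ, iterK (axisKillK μ) n j l * homK μ l (k₁, 0)) * x ^ k₁) := by
      have h1 := ENNReal.summable_toReal (hBfin n)
      refine h1.congr fun k₁ => ?_
      rw [hterm k₁, ENNReal.toReal_ofReal (hnn4 n k₁)]
    rw [ENNReal.ofReal_tsum_of_nonneg (hnn4 n) hsummable]
    exact (tsum_congr hterm).symm
  have hfinal : hitExp μ x j = (∑' n : ℕ, ∑' k₁ : ℤ, (∑' l : ℤ × ℤ,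
      RWaux.eIter (RWaux.killA (fun k' => ENNReal.ofReal (μ k'))) n j l
        * ENNReal.ofReal (μ ((k₁, 0) - l))) * ENNReal.ofReal x ^ k₁).toReal := by
    rw [show hitExp μ x j = ∑' n : ℕ, ∑' k₁ : ℤ,
      (∑' l : ℤ × ℤ, iterK (axisKillK μ) n j l * homK μ l (k₁, 0)) * x ^ k₁ from rfl]
    refine (tsum_congr fun n => ?_).trans (ENNReal.tsum_toReal_eq hBfin).symm
    rw [← hlayer2 n, ENNReal.toReal_ofReal (tsum_nonneg fun k₁ => hnn4 n k₁)]
  rw [hfinal, hEval0, ENNReal.toReal_mul, ← RWaux.ofReal_zpow hx, ← RWaux.ofReal_zpow hY₁pos,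
    ENNReal.toReal_ofReal (zpow_nonneg hx.le _), ENNReal.toReal_ofReal (zpow_nonneg hY₁pos.le _)]
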